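/- Let d, a, I be continuous ω-periodic real functions with d(t) > 0, g Lipschitz with constant G, and suppose there exists α > 0 with -(d(t) - α) + G|a(t)| ≤ 0 for all t. If x is an ω-periodic solution of u' = -d(t)u + a(t)g(u) + I(t), then x is the unique ω-periodic solution, and every solution u satisfies u(t) - x(t) → 0 exponentially as t → ∞. -/

import Mathlib

open Real Filter Topology

/-- Exponential contraction: any two solutions approach each other at rate α. -/
lemma stmt3_aux (G α : ℝ) (d a I g x u : ℝ → ℝ)
    (hg : ∀ p q, |g p - g q| ≤ G * |p - q|)
    (hstab : ∀ t, -(d t - α) + G * |a t| ≤ 0)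
    (hx : ∀ t, HasDerivAt x (-d t * x t + a t * g (x t) + I t) t)
    (hu : ∀ t, HasDerivAt u (-d t * u t + a t * g (u t) + I t) t) :
    ∀ t ≥ (0 : ℝ), |u t - x t| ≤ |u 0 - x 0| * Real.exp (-α * t) := by
  set v : ℝ → ℝ := fun t => u t - x t with hv
  have hv' : ∀ t, HasDerivAt v (-d t * v t + a t * (g (u t) - g (x t))) t := by
    intro t
    have h := (hu t).sub (hx t)
    refine h.congr_deriv ?_
    simp only [hv]; ring
  set f : ℝ → ℝ := fun t => (v t) ^ 2 * Real.exp (2 * α * t) with hf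
  have hf' : ∀ t, HasDerivAt f
      ((2 * v t * (-d t * v t + a t * (g (u t) - g (x t))) + 2 * α * (v t) ^ 2)
        * Real.exp (2 * α * t)) t := by
    intro t
    have h1 : HasDerivAt (fun t => (v t) ^ 2)
        (2 * v t * (-d t * v t + a t * (g (u t) - g (x t)))) t := by
      have := (hv' t).pow 2
      refine this.congr_deriv ?_; ring
    have h2 : HasDerivAt (fun t => Real.exp (2 * α * t)) (2 * α * Real.exp (2 * α * t)) t := by
      have := ((hasDerivAt_id t).const_mul (2 * α)).exp
      refine this.congr_deriv ?_
      simp only [id]; ring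
    have := h1.mul h2
    refine this.congr_deriv ?_; ring
  have hderiv_nonpos : ∀ t, deriv f t ≤ 0 := by
    intro t
    rw [(hf' t).deriv]
    have hexp : (0 : ℝ) < Real.exp (2 * α * t) := Real.exp_pos _
    have hΔ : |g (u t) - g (x t)| ≤ G * |v t| := hg (u t) (x t)
    have hprod : v t * (a t * (g (u t) - g (x t))) ≤ G * |a t| * (v t) ^ 2 := by
      calc v t * (a t * (g (u t) - g (x t))) ≤ |v t * (a t * (g (u t) - g (x t)))| :=
            le_abs_self _
        _ = |v t| * (|a t| * |g (u t) - g (x t)|) := by rw [abs_mul, abs_mul]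
        _ ≤ |v t| * (|a t| * (G * |v t|)) := by
            apply mul_le_mul_of_nonneg_left _ (abs_nonneg _)
            exact mul_le_mul_of_nonneg_left hΔ (abs_nonneg _)
        _ = G * |a t| * (v t) ^ 2 := by rw [← sq_abs (v t)]; ring
    have hst := hstab t
    have hv2 : (0 : ℝ) ≤ (v t) ^ 2 := sq_nonneg _
    have hkey : 2 * v t * (-d t * v t + a t * (g (u t) - g (x t))) + 2 * α * (v t) ^ 2 ≤ 0 := by
      nlinarith [mul_nonneg hv2 (neg_nonneg.mpr hst)]
    exact mul_nonpos_of_nonpos_of_nonneg hkey hexp.le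
  have hanti : Antitone f :=
    antitone_of_deriv_nonpos (fun t => (hf' t).differentiableAt) hderiv_nonpos
  intro t ht
  have hle : f t ≤ f 0 := hanti ht
  have h0 : (v 0) ^ 2 * Real.exp (2 * α * 0) = (v 0) ^ 2 := by norm_num
  have hE : (0 : ℝ) < Real.exp (2 * α * t) := Real.exp_pos _
  have hsq : (v t) ^ 2 ≤ (|v 0| * Real.exp (-α * t)) ^ 2 := by
    have : (v t) ^ 2 * Real.exp (2 * α * t) ≤ (v 0) ^ 2 := by
      simpa [hf, h0] using hle
    have hexps : (Real.exp (-α * t)) ^ 2 * Real.exp (2 * α * t) = 1 := by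
      rw [sq, ← Real.exp_add, ← Real.exp_add,
        show -α * t + -α * t + 2 * α * t = 0 by ring, Real.exp_zero]
    nlinarith [sq_abs (v 0), sq_nonneg (Real.exp (-α * t))]
  have hBnn : (0 : ℝ) ≤ |v 0| * Real.exp (-α * t) :=
    mul_nonneg (abs_nonneg _) (Real.exp_pos _).le
  nlinarith [sq_abs (v t), abs_nonneg (v t)]

/-- uniqueness of the ω-periodic solution and exponential
attraction of all solutions for u' = -d(t)u + a(t)g(u) + I(t). -/
theorem stmt3 (ω G α : ℝ) (d a I g x : ℝ → ℝ)
    (hω : 0 < ω) (hd : Continuous d) (ha : Continuous a) (hI : Continuous I)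
    (hdper : Function.Periodic d ω) (haper : Function.Periodic a ω)
    (hIper : Function.Periodic I ω)
    (hdpos : ∀ t, 0 < d t)
    (hg : ∀ p q, |g p - g q| ≤ G * |p - q|)
    (hα : 0 < α) (hstab : ∀ t, -(d t - α) + G * |a t| ≤ 0)
    (hx : ∀ t, HasDerivAt x (-d t * x t + a t * g (x t) + I t) t)
    (hxper : Function.Periodic x ω) :
    (∀ y : ℝ → ℝ, (∀ t, HasDerivAt y (-d t * y t + a t * g (y t) + I t) t) →
        Function.Periodic y ω → y = x) ∧
    (∀ u : ℝ → ℝ, (∀ t, HasDerivAt u (-d t * u t + a t * g (u t) + I t) t) →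
        ∃ K : ℝ, ∀ t ≥ (0 : ℝ), |u t - x t| ≤ K * Real.exp (-α * t)) := by
  constructor
  · intro y hy hyper
    funext t
    have hcontr := stmt3_aux G α d a I g x y hg hstab hx hy
    -- y t - x t = y (t + n ω) - x (t + n ω) for every n, which tends to 0
    have key : ∀ n : ℕ, t + n * ω ≥ 0 →
        |y t - x t| ≤ |y 0 - x 0| * Real.exp (-α * (t + n * ω)) := by
      intro n hn
      have hy' : y (t + n * ω) = y t := (hyper.nat_mul n) t
      have hx' : x (t + n * ω) = x t := (hxper.nat_mul n) t
      have := hcontr (t + n * ω) hn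
      rwa [hy', hx'] at this
    have htend : Tendsto (fun n : ℕ => |y 0 - x 0| * Real.exp (-α * (t + n * ω)))
        atTop (𝓝 0) := by
      have h1 : Tendsto (fun n : ℕ => t + n * ω) atTop atTop := by
        apply tendsto_atTop_add_const_left
        exact Tendsto.atTop_mul_const hω tendsto_natCast_atTop_atTop
      have h2 : Tendsto (fun n : ℕ => α * (t + n * ω)) atTop atTop :=
        Tendsto.const_mul_atTop hα h1
      have h3 : Tendsto (fun n : ℕ => Real.exp (-(α * (t + n * ω)))) atTop (𝓝 0) :=
        Real.tendsto_exp_neg_atTop_nhds_zero.comp h2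
      have := h3.const_mul |y 0 - x 0|
      simpa [neg_mul, mul_zero] using this
    have hev : ∀ᶠ n : ℕ in atTop, |y t - x t| ≤
        |y 0 - x 0| * Real.exp (-α * (t + n * ω)) := by
      have h1 : Tendsto (fun n : ℕ => t + n * ω) atTop atTop := by
        apply tendsto_atTop_add_const_left
        exact Tendsto.atTop_mul_const hω tendsto_natCast_atTop_atTop
      filter_upwards [h1.eventually_ge_atTop 0] with n hn
      exact key n hn
    have h0 : |y t - x t| ≤ 0 := ge_of_tendsto htend hev
    have := abs_nonneg (y t - x t)
    have : |y t - x t| = 0 := le_antisymm h0 this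
    have := abs_eq_zero.mp this
    linarith
  · intro u hu
    exact ⟨|u 0 - x 0|, stmt3_aux G α d a I g x u hg hstab hx hu⟩
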